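/- Let G be a simple graph on vertex set {1,…,n} with n ≥ 2, and let A be its adjacency matrix over ℕ. For each j, let A_j be the n×n matrix whose (u,v) entry equals A_{u,v} if both u ≥ j and v ≥ j, and 0 otherwise. Then for every vertex i, the number of clows of length n in G with head i equals the (i,i) entry of the matrix product A_i · A_{i+1}^{n-2} · A_i. -/

import Mathlib

open Finset

lemma powSum {V : Type*} [Fintype V] [DecidableEq V] (M : Matrix V V ℕ) (m : ℕ) :
    ∀ (a b : V), (M ^ m) a b =
      ∑ v : Fin (m+1) → V, if v 0 = a ∧ v (Fin.last m) = b
        then ∏ k : Fin m, M (v k.castSucc) (v k.succ) else 0 := by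
  induction m with
  | zero =>
    intro a b
    rw [show (∑ v : Fin (0+1) → V, if v 0 = a ∧ v (Fin.last 0) = b
          then ∏ k : Fin 0, M (v k.castSucc) (v k.succ) else 0)
        = ∑ c : V, if c = a ∧ c = b then 1 else 0 from
      Fintype.sum_equiv (Equiv.funUnique (Fin 1) V) _ _ (fun v => by
        simp [Fin.last, Equiv.funUnique, show (⟨0, by omega⟩ : Fin 1) = 0 from rfl])]
    simp only [ite_and, Finset.sum_ite_eq' univ a (fun c => if c = b then 1 else 0),
      Finset.mem_univ, if_true]
    rw [pow_zero, Matrix.one_apply]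
  | succ m ih =>
    intro a b
    rw [pow_succ, Matrix.mul_apply]
    simp only [ih]
    rw [show (∑ v : Fin (m+1+1) → V, if v 0 = a ∧ v (Fin.last (m+1)) = b
          then ∏ k : Fin (m+1), M (v k.castSucc) (v k.succ) else 0)
        = ∑ p : V × (Fin (m+1) → V),
            if p.2 0 = a ∧ p.1 = b
            then (∏ k : Fin m, M (p.2 k.castSucc) (p.2 k.succ)) * M (p.2 (Fin.last m)) p.1
            else 0 from
      Fintype.sum_equiv (Fin.snocEquiv (fun _ : Fin (m+2) => V)).symm _ _ (fun v => by
        simp only [Fin.snocEquiv_symm_apply]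
        rw [Fin.prod_univ_castSucc (fun k : Fin (m+1) => M (v k.castSucc) (v k.succ))]
        simp [Fin.init, Fin.succ_castSucc, Fin.succ_last, Fin.castSucc_zero, -Fin.castSucc_succ]
        rfl)]
    rw [Fintype.sum_prod_type]
    simp only [Finset.sum_mul]
    rw [Finset.sum_comm]
    conv_rhs => rw [Finset.sum_comm]
    refine Finset.sum_congr rfl fun u _ => ?_
    by_cases hu : u 0 = a
    · simp [hu, Finset.sum_ite_eq, Finset.sum_ite_eq']
    · simp [hu]

open Finset

/-- The `n × n` matrix over `ℕ` whose `(u,v)` entry is the `(u,v)` entry of the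
adjacency matrix of `G` if both `u ≥ j` and `v ≥ j`, and `0` otherwise. -/
def restrictMat {n : ℕ} (G : SimpleGraph (Fin n)) [DecidableRel G.Adj] (j : ℕ) :
    Matrix (Fin n) (Fin n) ℕ :=
  Matrix.of fun u v => if j ≤ (u : ℕ) ∧ j ≤ (v : ℕ) then G.adjMatrix ℕ u v else 0

lemma restrictMat_apply {n : ℕ} (G : SimpleGraph (Fin n)) [DecidableRel G.Adj] (j : ℕ)
    (u v : Fin n) :
    restrictMat G j u v = if (j ≤ (u : ℕ) ∧ j ≤ (v : ℕ)) ∧ G.Adj u v then 1 else 0 := by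
  simp only [restrictMat, Matrix.of_apply, SimpleGraph.adjMatrix_apply, ite_and]

lemma iteMulIte (p q : Prop) [Decidable p] [Decidable q] :
    (if p then 1 else 0 : ℕ) * (if q then 1 else 0) = if p ∧ q then 1 else 0 := by
  split_ifs with h1 h2 h3 <;> simp_all

lemma clow_iff (m : ℕ) (G : SimpleGraph (Fin (m+2))) [DecidableRel G.Adj] (i : Fin (m+2))
    (v : Fin (m+1) → Fin (m+2)) :
    ((∀ k : Fin (m+2), G.Adj ((Fin.cons i v : Fin (m+2) → Fin (m+2)) k)
        ((Fin.cons i v : Fin (m+2) → Fin (m+2)) (k+1))) ∧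
      (∀ j : Fin (m+2), j ≠ 0 → (Fin.cons i v : Fin (m+2) → Fin (m+2)) 0
        < (Fin.cons i v : Fin (m+2) → Fin (m+2)) j) ∧
      (Fin.cons i v : Fin (m+2) → Fin (m+2)) 0 = i)
    ↔ ((((i:ℕ) ≤ (i:ℕ) ∧ (i:ℕ) ≤ (v 0 : ℕ)) ∧ G.Adj i (v 0)) ∧
        (∀ k : Fin m, (((i:ℕ)+1 ≤ (v k.castSucc : ℕ) ∧ (i:ℕ)+1 ≤ (v k.succ : ℕ)) ∧
          G.Adj (v k.castSucc) (v k.succ))) ∧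
        ((((i:ℕ) ≤ (v (Fin.last m) : ℕ) ∧ (i:ℕ) ≤ (i:ℕ))) ∧ G.Adj (v (Fin.last m)) i)) := by
  have F2 : (0 : Fin (m+2)) + 1 = Fin.succ 0 := by
    ext; simp [Fin.val_add, Nat.mod_eq_of_lt]
  constructor
  · rintro ⟨hadj, hord, -⟩
    have hlt : ∀ t : Fin (m+1), (i:ℕ) < (v t : ℕ) := by
      intro t
      have := hord t.succ (Fin.succ_ne_zero t)
      rwa [Fin.cons_zero, Fin.cons_succ, Fin.lt_def] at this
    refine ⟨⟨⟨le_refl _, (hlt 0).le⟩, ?_⟩, fun k => ⟨⟨hlt _, hlt _⟩, ?_⟩,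
      ⟨⟨(hlt _).le, le_refl _⟩, ?_⟩⟩
    · have := hadj 0
      rwa [F2, Fin.cons_zero, Fin.cons_succ] at this
    · have := hadj ((k.castSucc).succ)
      rwa [show ((k.castSucc).succ : Fin (m+2)) + 1 = k.succ.succ from by
          rw [Fin.succ_castSucc, Fin.coeSucc_eq_succ],
        Fin.cons_succ, Fin.cons_succ] at this
    · have := hadj ((Fin.last m).succ)
      rwa [show ((Fin.last m).succ : Fin (m+2)) + 1 = 0 from by
          rw [Fin.succ_last, Fin.last_add_one],
        Fin.cons_succ, Fin.cons_zero] at this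
  · rintro ⟨⟨⟨-, h0le⟩, h0adj⟩, hmid, ⟨⟨hlle, -⟩, hladj⟩⟩
    have hlt : ∀ t : Fin (m+1), (i:ℕ) < (v t : ℕ) := by
      intro t
      induction t using Fin.cases with
      | zero =>
        rcases lt_or_eq_of_le h0le with h | h
        · exact h
        · exact absurd (Fin.ext h) h0adj.ne
      | succ k => have := (hmid k).1.2; omega
    refine ⟨?_, ?_, Fin.cons_zero _ _⟩
    · intro k
      induction k using Fin.cases with
      | zero => rwa [F2, Fin.cons_zero, Fin.cons_succ]
      | succ j =>
        induction j using Fin.lastCases with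
        | last =>
          rw [show ((Fin.last m).succ : Fin (m+2)) + 1 = 0 from by
              rw [Fin.succ_last, Fin.last_add_one],
            Fin.cons_succ, Fin.cons_zero]
          exact hladj
        | cast t =>
          rw [show ((t.castSucc).succ : Fin (m+2)) + 1 = t.succ.succ from by
              rw [Fin.succ_castSucc, Fin.coeSucc_eq_succ],
            Fin.cons_succ, Fin.cons_succ]
          exact (hmid t).2
    · intro j hj
      rw [Fin.cons_zero]
      induction j using Fin.cases with
      | zero => exact absurd rfl hj
      | succ t => rw [Fin.cons_succ, Fin.lt_def]; exact hlt t

set_option maxHeartbeats 1000000 in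
theorem stmt7 (n : ℕ) (hn : 2 ≤ n) [NeZero n]
    (G : SimpleGraph (Fin n)) [DecidableRel G.Adj] (i : Fin n) :
    (univ.filter (fun w : Fin n → Fin n =>
        (∀ k : Fin n, G.Adj (w k) (w (k + 1))) ∧
        (∀ j : Fin n, j ≠ 0 → w 0 < w j) ∧
        w 0 = i)).card
    = (restrictMat G (i : ℕ) * restrictMat G ((i : ℕ) + 1) ^ (n - 2) *
        restrictMat G (i : ℕ)) i i := by
  obtain ⟨m, rfl⟩ : ∃ m, n = m + 2 := ⟨n - 2, by omega⟩
  have hm2 : m + 2 - 2 = m := by omega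
  rw [hm2]
  have h1 : ∀ b, (restrictMat G (i:ℕ) * restrictMat G ((i:ℕ)+1) ^ m) i b
      = ∑ v : Fin (m+1) → Fin (m+2), if v (Fin.last m) = b
          then restrictMat G (i:ℕ) i (v 0) *
            ∏ k : Fin m, restrictMat G ((i:ℕ)+1) (v k.castSucc) (v k.succ) else 0 := by
    intro b
    rw [Matrix.mul_apply]
    simp only [powSum, Finset.mul_sum, mul_ite, mul_zero]
    rw [Finset.sum_comm]
    refine Finset.sum_congr rfl fun v _ => ?_
    by_cases hv : v (Fin.last m) = b
    · simp [hv, Finset.sum_ite_eq]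
    · simp [hv]
  have h2 : (restrictMat G (i:ℕ) * restrictMat G ((i:ℕ)+1) ^ m * restrictMat G (i:ℕ)) i i
      = ∑ v : Fin (m+1) → Fin (m+2),
          restrictMat G (i:ℕ) i (v 0) *
            (∏ k : Fin m, restrictMat G ((i:ℕ)+1) (v k.castSucc) (v k.succ)) *
            restrictMat G (i:ℕ) (v (Fin.last m)) i := by
    rw [Matrix.mul_apply]
    simp only [h1, Finset.sum_mul, ite_mul, zero_mul]
    rw [Finset.sum_comm]
    refine Finset.sum_congr rfl fun v _ => ?_
    simp [Finset.sum_ite_eq]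
  rw [h2, Finset.card_filter]
  rw [show (∑ w ∈ (univ : Finset (Fin (m+2) → Fin (m+2))),
        if (∀ k : Fin (m+2), G.Adj (w k) (w (k + 1))) ∧
            (∀ j : Fin (m+2), j ≠ 0 → w 0 < w j) ∧ w 0 = i then 1 else 0)
      = ∑ p : Fin (m+2) × (Fin (m+1) → Fin (m+2)),
          if (∀ k : Fin (m+2), G.Adj ((Fin.cons p.1 p.2 : Fin (m+2) → Fin (m+2)) k) ((Fin.cons p.1 p.2 : Fin (m+2) → Fin (m+2)) (k + 1))) ∧
              (∀ j : Fin (m+2), j ≠ 0 → (Fin.cons p.1 p.2 : Fin (m+2) → Fin (m+2)) 0 < (Fin.cons p.1 p.2 : Fin (m+2) → Fin (m+2)) j) ∧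
              (Fin.cons p.1 p.2 : Fin (m+2) → Fin (m+2)) 0 = i then 1 else 0 from
    (Fintype.sum_equiv (Fin.consEquiv (fun _ : Fin (m+2) => Fin (m+2)))
      (fun p : Fin (m+2) × (Fin (m+1) → Fin (m+2)) =>
        if (∀ k : Fin (m+2), G.Adj ((Fin.cons p.1 p.2 : Fin (m+2) → Fin (m+2)) k) ((Fin.cons p.1 p.2 : Fin (m+2) → Fin (m+2)) (k + 1))) ∧
              (∀ j : Fin (m+2), j ≠ 0 → (Fin.cons p.1 p.2 : Fin (m+2) → Fin (m+2)) 0 < (Fin.cons p.1 p.2 : Fin (m+2) → Fin (m+2)) j) ∧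
              (Fin.cons p.1 p.2 : Fin (m+2) → Fin (m+2)) 0 = i then 1 else 0)
      (fun w : Fin (m+2) → Fin (m+2) =>
        if (∀ k : Fin (m+2), G.Adj (w k) (w (k + 1))) ∧
            (∀ j : Fin (m+2), j ≠ 0 → w 0 < w j) ∧ w 0 = i then 1 else 0)
      (fun p => rfl)).symm]
  rw [Fintype.sum_prod_type]
  rw [show (∑ c : Fin (m+2), ∑ v : Fin (m+1) → Fin (m+2),
        if (∀ k : Fin (m+2), G.Adj ((Fin.cons c v : Fin (m+2) → Fin (m+2)) k) ((Fin.cons c v : Fin (m+2) → Fin (m+2)) (k + 1))) ∧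
            (∀ j : Fin (m+2), j ≠ 0 → (Fin.cons c v : Fin (m+2) → Fin (m+2)) 0 < (Fin.cons c v : Fin (m+2) → Fin (m+2)) j) ∧
            (Fin.cons c v : Fin (m+2) → Fin (m+2)) 0 = i then 1 else 0)
      = ∑ v : Fin (m+1) → Fin (m+2), ∑ c : Fin (m+2),
          if (∀ k : Fin (m+2), G.Adj ((Fin.cons c v : Fin (m+2) → Fin (m+2)) k) ((Fin.cons c v : Fin (m+2) → Fin (m+2)) (k + 1))) ∧
            (∀ j : Fin (m+2), j ≠ 0 → (Fin.cons c v : Fin (m+2) → Fin (m+2)) 0 < (Fin.cons c v : Fin (m+2) → Fin (m+2)) j) ∧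
            (Fin.cons c v : Fin (m+2) → Fin (m+2)) 0 = i then 1 else 0 from Finset.sum_comm]
  refine Finset.sum_congr rfl fun v _ => ?_
  have hc : ∀ c : Fin (m+2),
      (if (∀ k : Fin (m+2), G.Adj ((Fin.cons c v : Fin (m+2) → Fin (m+2)) k) ((Fin.cons c v : Fin (m+2) → Fin (m+2)) (k + 1))) ∧
            (∀ j : Fin (m+2), j ≠ 0 → (Fin.cons c v : Fin (m+2) → Fin (m+2)) 0 < (Fin.cons c v : Fin (m+2) → Fin (m+2)) j) ∧
            (Fin.cons c v : Fin (m+2) → Fin (m+2)) 0 = i then 1 else 0)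
      = if c = i then
          (if (∀ k : Fin (m+2), G.Adj ((Fin.cons i v : Fin (m+2) → Fin (m+2)) k) ((Fin.cons i v : Fin (m+2) → Fin (m+2)) (k + 1))) ∧
            (∀ j : Fin (m+2), j ≠ 0 → (Fin.cons i v : Fin (m+2) → Fin (m+2)) 0 < (Fin.cons i v : Fin (m+2) → Fin (m+2)) j) ∧
            (Fin.cons i v : Fin (m+2) → Fin (m+2)) 0 = i then 1 else 0) else 0 := by
    intro c
    by_cases hci : c = i
    · subst hci; simp
    · rw [if_neg hci, if_neg]
      rintro ⟨-, -, h⟩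
      rw [Fin.cons_zero] at h
      exact hci h
  rw [Finset.sum_congr rfl (fun c _ => hc c), Finset.sum_ite_eq' univ i,
    if_pos (mem_univ i)]
  simp only [restrictMat_apply, Fintype.prod_boole, iteMulIte]
  by_cases h : (∀ k : Fin (m+2), G.Adj ((Fin.cons i v : Fin (m+2) → Fin (m+2)) k)
        ((Fin.cons i v : Fin (m+2) → Fin (m+2)) (k + 1))) ∧
      (∀ j : Fin (m+2), j ≠ 0 → (Fin.cons i v : Fin (m+2) → Fin (m+2)) 0
        < (Fin.cons i v : Fin (m+2) → Fin (m+2)) j) ∧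
      (Fin.cons i v : Fin (m+2) → Fin (m+2)) 0 = i
  · obtain ⟨hq1, hq2, hq3⟩ := (clow_iff m G i v).mp h
    rw [if_pos h, if_pos ⟨⟨hq1, hq2⟩, hq3⟩]
  · rw [if_neg h, if_neg (fun hq => h ((clow_iff m G i v).mpr ⟨hq.1.1, hq.1.2, hq.2⟩))]
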